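/- arXiv:1404.3660 — 2 statements merged into one kernel-verified Lean document; each statement's English description precedes it below -/
import Mathlib

section
/- Let (G, v0, c, d, W) be a CARP instance on the complete graph on a finite vertex set V that admits at least one feasible solution, let OPT denote the minimum c-cost of a feasible solution for (G, v0, c, d, W), and let OPT^▼ denote the minimum c^▼-cost of a feasible solution for (G, v0, c^▼, d, W). Then OPT = OPT^▼ + r. -/
noncomputable section

/-- Cost of a walk: sum of edge costs over its edge traversals,
counted with multiplicity. -/
def walkCost {V : Type*} {G : SimpleGraph V} (γ : Sym2 V → ℝ)
    {u v : V} (p : G.Walk u v) : ℝ :=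
  (p.edges.map γ).sum

/-- Minimum `c`-cost of a walk from `u` to `v` in `G`
(`graphDist G c u u = 0` via the trivial walk). -/
def graphDist {V : Type*} (G : SimpleGraph V) (c : Sym2 V → ℝ) (u v : V) : ℝ :=
  sInf {x : ℝ | ∃ p : G.Walk u v, walkCost c p = x}

/-- A feasible CARP solution on the complete graph on `V` with depot `v0`,
demand function `d` and capacity `W`: a finite family of closed walks, each
through the depot, together with a serving function assigning to each walk a
set of (positive-demand) edges it traverses, of total demand at most `W`,
such that every positive-demand edge is served by exactly one walk.
(Feasibility does not depend on the edge costs.) -/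
structure CARPSol (V : Type*) (v0 : V) (d : Sym2 V → ℝ) (W : ℝ) where
  n : ℕ
  walk : Fin n → (⊤ : SimpleGraph V).Walk v0 v0
  serve : Fin n → Finset (Sym2 V)
  serve_subset : ∀ i, ∀ e ∈ serve i, e ∈ (walk i).edges
  serve_pos : ∀ i, ∀ e ∈ serve i, 0 < d e
  serve_cap : ∀ i, ∑ e ∈ serve i, d e ≤ W
  serve_unique : ∀ e : Sym2 V, 0 < d e → ∃! i, e ∈ serve i

/-- Cost of a CARP solution with respect to an edge-cost function `γ`:
the sum over its walks of their traversal costs. -/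
def solCost {V : Type*} {v0 : V} {d : Sym2 V → ℝ} {W : ℝ}
    (γ : Sym2 V → ℝ) (sol : CARPSol V v0 d W) : ℝ :=
  ∑ i, walkCost γ (sol.walk i)

end

section Helpers

open SimpleGraph

lemma list_sublist_sum_le {l l' : List ℝ} (h : List.Sublist l l') (h0 : ∀ x ∈ l', 0 ≤ x) :
    l.sum ≤ l'.sum := by
  induction h with
  | slnil => simp
  | @cons l₁ l₂ a h ih =>
      have := ih (fun x hx => h0 x (List.mem_cons_of_mem _ hx))
      have ha := h0 a (List.mem_cons_self)
      simpa using le_trans this (by linarith [List.sum_cons (a := a) (l := l₂)] )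
  | @cons_cons l₁ l₂ a h ih =>
      have := ih (fun x hx => h0 x (List.mem_cons_of_mem _ hx))
      simp only [List.sum_cons]
      linarith

lemma nodup_subset_map_sum_le {α : Type*} {F : α → ℝ} {a b : List α}
    (hn : a.Nodup) (hs : a ⊆ b) (h0 : ∀ e ∈ b, 0 ≤ F e) :
    (a.map F).sum ≤ (b.map F).sum := by
  obtain ⟨l, hperm, hsl⟩ := hn.subperm hs
  have h1 : (l.map F).sum = (a.map F).sum := (hperm.map F).sum_eq
  have h2 : (l.map F).sum ≤ (b.map F).sum :=
    list_sublist_sum_le (hsl.map F)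
      (by intro x hx; obtain ⟨e, he, rfl⟩ := List.mem_map.mp hx; exact h0 e he)
  linarith

lemma finsetsum_le_listsum {α : Type*} [DecidableEq α] {F : α → ℝ}
    {s : Finset α} {l : List α} (hsub : ∀ e ∈ s, e ∈ l) (h0 : ∀ e ∈ l, 0 ≤ F e) :
    ∑ e ∈ s, F e ≤ (l.map F).sum := by
  rw [← Finset.sum_map_toList]
  exact nodup_subset_map_sum_le s.nodup_toList
    (fun e he => hsub e (by simpa using he)) h0

variable {V : Type*}

lemma walkCost_nil {G : SimpleGraph V} (γ : Sym2 V → ℝ) {u : V} :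
    walkCost γ (SimpleGraph.Walk.nil : G.Walk u u) = 0 := by simp [walkCost]

lemma walkCost_cons {G : SimpleGraph V} (γ : Sym2 V → ℝ) {u v w : V}
    (h : G.Adj u v) (p : G.Walk v w) :
    walkCost γ (SimpleGraph.Walk.cons h p) = γ s(u, v) + walkCost γ p := by
  simp [walkCost]

lemma walkCost_append {G : SimpleGraph V} (γ : Sym2 V → ℝ) {u v w : V}
    (p : G.Walk u v) (q : G.Walk v w) :
    walkCost γ (p.append q) = walkCost γ p + walkCost γ q := by
  simp [walkCost, SimpleGraph.Walk.edges_append]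

lemma walkCost_nonneg {G : SimpleGraph V} {γ : Sym2 V → ℝ} (h0 : ∀ e, 0 ≤ γ e)
    {u v : V} (p : G.Walk u v) : 0 ≤ walkCost γ p := by
  apply List.sum_nonneg
  intro x hx
  obtain ⟨e, _, rfl⟩ := List.mem_map.mp hx
  exact h0 e

/-- some walk between any two vertices of the complete graph -/
def anyWalk [DecidableEq V] (u v : V) : (⊤ : SimpleGraph V).Walk u v :=
  if h : u = v then h ▸ SimpleGraph.Walk.nil
  else SimpleGraph.Walk.cons (by simp [h]) SimpleGraph.Walk.nil

lemma graphDist_nonempty [DecidableEq V] (c : Sym2 V → ℝ) (u v : V) :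
    {x : ℝ | ∃ p : (⊤ : SimpleGraph V).Walk u v, walkCost c p = x}.Nonempty :=
  ⟨_, anyWalk u v, rfl⟩

lemma graphDist_bddBelow {c : Sym2 V → ℝ} (hc : ∀ e, 0 ≤ c e) (u v : V) :
    BddBelow {x : ℝ | ∃ p : (⊤ : SimpleGraph V).Walk u v, walkCost c p = x} := by
  refine ⟨0, fun x hx => ?_⟩
  obtain ⟨p, rfl⟩ := hx
  exact walkCost_nonneg hc p

lemma graphDist_le {c : Sym2 V → ℝ} (hc : ∀ e, 0 ≤ c e) {u v : V}
    (p : (⊤ : SimpleGraph V).Walk u v) :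
    graphDist (⊤ : SimpleGraph V) c u v ≤ walkCost c p :=
  csInf_le (graphDist_bddBelow hc u v) ⟨p, rfl⟩

lemma graphDist_nonneg [DecidableEq V] {c : Sym2 V → ℝ} (hc : ∀ e, 0 ≤ c e) (u v : V) :
    0 ≤ graphDist (⊤ : SimpleGraph V) c u v := by
  apply le_csInf (graphDist_nonempty c u v)
  rintro x ⟨p, rfl⟩
  exact walkCost_nonneg hc p

lemma exists_shortest [Fintype V] [DecidableEq V] {c : Sym2 V → ℝ}
    (hc : ∀ e, 0 ≤ c e) (u v : V) :
    ∃ p : (⊤ : SimpleGraph V).Walk u v,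
      walkCost c p = graphDist (⊤ : SimpleGraph V) c u v := by
  classical
  -- the finite set of path costs
  have hne : (Finset.univ.image
      (fun p : (⊤ : SimpleGraph V).Path u v => walkCost c p.val)).Nonempty := by
    refine ⟨walkCost c (anyWalk u v).bypass, Finset.mem_image.mpr
      ⟨⟨(anyWalk u v).bypass, (anyWalk u v).bypass_isPath⟩, Finset.mem_univ _, rfl⟩⟩
  set T := Finset.univ.image
      (fun p : (⊤ : SimpleGraph V).Path u v => walkCost c p.val) with hT
  obtain ⟨p0, _, hp0⟩ := Finset.mem_image.mp (T.min'_mem hne)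
  refine ⟨p0.val, le_antisymm ?_ (graphDist_le hc _)⟩
  apply le_csInf (graphDist_nonempty c u v)
  rintro x ⟨q, rfl⟩
  have h1 : walkCost c q.bypass ≤ walkCost c q :=
    nodup_subset_map_sum_le (q.bypass_isPath.edges_nodup) q.edges_bypass_subset
      (fun e _ => hc e)
  have h2 : T.min' hne ≤ walkCost c q.bypass :=
    T.min'_le _ (Finset.mem_image.mpr ⟨⟨q.bypass, q.bypass_isPath⟩, Finset.mem_univ _, rfl⟩)
  rw [← hp0] at h2
  linarith

end Helpers


section Convert

variable {V : Type*} [DecidableEq V]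

open SimpleGraph

def convertWalk (sp : ∀ u v : V, (⊤ : SimpleGraph V).Walk u v) :
    ∀ {u v : V}, (⊤ : SimpleGraph V).Walk u v → Finset (Sym2 V) →
      (⊤ : SimpleGraph V).Walk u v
  | _, _, SimpleGraph.Walk.nil, _ => SimpleGraph.Walk.nil
  | u, _, SimpleGraph.Walk.cons (v := w) h q, S =>
    if s(u, w) ∈ S then
      SimpleGraph.Walk.cons h (convertWalk sp q (S.erase s(u, w)))
    else (sp u w).append (convertWalk sp q S)

lemma convertWalk_edges (sp : ∀ u v : V, (⊤ : SimpleGraph V).Walk u v)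
    {u v : V} (p : (⊤ : SimpleGraph V).Walk u v) :
    ∀ S : Finset (Sym2 V), (∀ e ∈ S, e ∈ p.edges) →
      ∀ e ∈ S, e ∈ (convertWalk sp p S).edges := by
  induction p with
  | nil =>
      intro S hS e he
      exact absurd (hS e he) (by simp)
  | @cons u w v h q ih =>
      intro S hS e he
      by_cases hmem : s(u, w) ∈ S
      · rw [show convertWalk sp (SimpleGraph.Walk.cons h q) S
          = SimpleGraph.Walk.cons h (convertWalk sp q (S.erase s(u, w))) by
            simp [convertWalk, hmem]]
        rw [SimpleGraph.Walk.edges_cons]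
        by_cases heq : e = s(u, w)
        · exact heq ▸ List.mem_cons_self
        · refine List.mem_cons_of_mem _ ?_
          refine ih (S.erase s(u, w)) ?_ e (Finset.mem_erase.mpr ⟨heq, he⟩)
          intro e' he'
          have := hS e' (Finset.mem_of_mem_erase he')
          rw [SimpleGraph.Walk.edges_cons] at this
          rcases List.mem_cons.mp this with h' | h'
          · exact absurd h' (Finset.mem_erase.mp he').1
          · exact h'
      · rw [show convertWalk sp (SimpleGraph.Walk.cons h q) S
          = (sp u w).append (convertWalk sp q S) by simp [convertWalk, hmem]]
        rw [SimpleGraph.Walk.edges_append]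
        refine List.mem_append_right _ ?_
        refine ih S ?_ e he
        intro e' he'
        have := hS e' he'
        rw [SimpleGraph.Walk.edges_cons] at this
        rcases List.mem_cons.mp this with h' | h'
        · exact absurd (h' ▸ he') hmem
        · exact h'

lemma convertWalk_cost (c cBk : Sym2 V → ℝ)
    (sp : ∀ u v : V, (⊤ : SimpleGraph V).Walk u v)
    (hsp : ∀ u v : V, walkCost c (sp u v) = cBk s(u, v))
    {u v : V} (p : (⊤ : SimpleGraph V).Walk u v) :
    ∀ S : Finset (Sym2 V), (∀ e ∈ S, e ∈ p.edges) →
      walkCost c (convertWalk sp p S)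
        = walkCost cBk p + ∑ e ∈ S, (c e - cBk e) := by
  induction p with
  | nil =>
      intro S hS
      have : S = ∅ := by
        refine Finset.eq_empty_of_forall_notMem fun e he => ?_
        exact absurd (hS e he) (by simp)
      subst this
      simp [convertWalk, walkCost_nil]
  | @cons u w v h q ih =>
      intro S hS
      by_cases hmem : s(u, w) ∈ S
      · rw [show convertWalk sp (SimpleGraph.Walk.cons h q) S
          = SimpleGraph.Walk.cons h (convertWalk sp q (S.erase s(u, w))) by
            simp [convertWalk, hmem]]
        rw [walkCost_cons, walkCost_cons]
        rw [ih (S.erase s(u, w)) ?side]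
        case side =>
          intro e' he'
          have := hS e' (Finset.mem_of_mem_erase he')
          rw [SimpleGraph.Walk.edges_cons] at this
          rcases List.mem_cons.mp this with h' | h'
          · exact absurd h' (Finset.mem_erase.mp he').1
          · exact h'
        rw [← Finset.add_sum_erase S _ hmem]
        ring
      · rw [show convertWalk sp (SimpleGraph.Walk.cons h q) S
          = (sp u w).append (convertWalk sp q S) by simp [convertWalk, hmem]]
        rw [walkCost_append, hsp, walkCost_cons]
        rw [ih S ?side2]
        case side2 =>
          intro e' he'
          have := hS e' he'
          rw [SimpleGraph.Walk.edges_cons] at this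
          rcases List.mem_cons.mp this with h' | h'
          · exact absurd (h' ▸ he') hmem
          · exact h'
        ring

end Convert

/-- if the CARP instance admits a feasible solution, then the
minimum `c`-cost `OPT` of a feasible solution equals the minimum `c▼`-cost
`OPT▼` of a feasible solution plus `r = Σ_{e ∈ R} (c▽(e) - c▼(e))`. -/
theorem opt_eq_optBlackDown_add_r {V : Type*} [Fintype V] [DecidableEq V]
    (v0 : V) (c d : Sym2 V → ℝ) (W : ℝ)
    (hc : ∀ e, 0 ≤ c e) (hd : ∀ e, 0 ≤ d e) (hW : 0 ≤ W)
    (cDn cBk : Sym2 V → ℝ)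
    (hDn : ∀ u v : V, cDn s(u, v) =
      if 0 < d s(u, v) then c s(u, v) else graphDist (⊤ : SimpleGraph V) c u v)
    (hBk : ∀ u v : V, cBk s(u, v) = graphDist (⊤ : SimpleGraph V) c u v)
    (hfeas : Nonempty (CARPSol V v0 d W)) :
    sInf {x : ℝ | ∃ sol : CARPSol V v0 d W, solCost c sol = x} =
      sInf {x : ℝ | ∃ sol : CARPSol V v0 d W, solCost cBk sol = x} +
        ∑ e ∈ Finset.univ.filter (fun e : Sym2 V => 0 < d e ∧ cDn e ≠ cBk e),
          (cDn e - cBk e) := by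
  classical
  set Rset := Finset.univ.filter (fun e : Sym2 V => 0 < d e ∧ cDn e ≠ cBk e) with hRset
  set r := ∑ e ∈ Rset, (cDn e - cBk e) with hr
  -- shortest walks
  choose sp hsp using fun u v : V => exists_shortest (c := c) hc u v
  have hsp' : ∀ u v : V, walkCost c (sp u v) = cBk s(u, v) := by
    intro u v; rw [hsp, hBk]
  -- basic facts about cBk
  have hBk0 : ∀ e : Sym2 V, 0 ≤ cBk e := by
    intro e
    induction e using Sym2.ind with
    | _ u v => rw [hBk]; exact graphDist_nonneg hc u v
  have hBkle : ∀ u v : V, u ≠ v → cBk s(u, v) ≤ c s(u, v) := by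
    intro u v huv
    rw [hBk]
    have := graphDist_le hc (SimpleGraph.Walk.cons
      (by simp [huv] : (⊤ : SimpleGraph V).Adj u v) SimpleGraph.Walk.nil)
    simpa [walkCost] using this
  -- F vanishes on served edges outside Rset; F = cDn - cBk on served ∩ Rset
  have hcDn : ∀ e : Sym2 V, 0 < d e → cDn e = c e := by
    intro e he
    induction e using Sym2.ind with
    | _ u v => rw [hDn]; exact if_pos he
  have hF0 : ∀ e : Sym2 V, 0 < d e → e ∉ Rset → c e - cBk e = 0 := by
    intro e hde heR
    have : cDn e = cBk e := by
      by_contra hne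
      exact heR (Finset.mem_filter.mpr ⟨Finset.mem_univ _, hde, hne⟩)
    rw [← hcDn e hde, this]; ring
  -- key combinatorial identity
  have hkey : ∀ sol : CARPSol V v0 d W,
      ∑ i, ∑ e ∈ sol.serve i ∩ Rset, (c e - cBk e) = r := by
    intro sol
    have step1 : ∀ i, ∑ e ∈ sol.serve i ∩ Rset, (c e - cBk e)
        = ∑ e ∈ Rset, (if e ∈ sol.serve i then c e - cBk e else 0) := by
      intro i
      rw [← Finset.sum_filter]
      congr 1
      ext e
      simp [Finset.mem_inter, Finset.mem_filter, and_comm]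
    rw [Finset.sum_congr rfl (fun i _ => step1 i), Finset.sum_comm]
    rw [hr]
    refine Finset.sum_congr rfl fun e he => ?_
    have hde : 0 < d e := (Finset.mem_filter.mp he).2.1
    obtain ⟨i0, hi0, hi0u⟩ := sol.serve_unique e hde
    rw [Finset.sum_eq_single_of_mem i0 (Finset.mem_univ _)
      (fun j _ hj => if_neg (fun hmem => hj (hi0u j hmem)))]
    rw [if_pos hi0, hcDn e hde]
  -- lower bound: every solution's c-cost dominates its cBk-cost plus r
  have hgeq : ∀ sol : CARPSol V v0 d W, solCost cBk sol + r ≤ solCost c sol := by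
    intro sol
    have hFnn : ∀ i : Fin sol.n, ∀ e ∈ (sol.walk i).edges, 0 ≤ c e - cBk e := by
      intro i e he
      have hE := (sol.walk i).edges_subset_edgeSet he
      induction e using Sym2.ind with
      | _ u v =>
          have huv : u ≠ v := ((SimpleGraph.mem_edgeSet _).mp hE : (⊤ : SimpleGraph V).Adj u v).ne
          linarith [hBkle u v huv]
    have hper : ∀ i : Fin sol.n,
        ∑ e ∈ sol.serve i ∩ Rset, (c e - cBk e)
          ≤ (((sol.walk i).edges).map (fun e => c e - cBk e)).sum := by
      intro i
      refine finsetsum_le_listsum ?_ (hFnn i)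
      intro e he
      exact sol.serve_subset i e (Finset.mem_inter.mp he).1
    have hsplit : ∀ i : Fin sol.n,
        (((sol.walk i).edges).map (fun e => c e - cBk e)).sum
          = walkCost c (sol.walk i) - walkCost cBk (sol.walk i) := by
      intro i
      simp only [walkCost]
      induction (sol.walk i).edges with
      | nil => simp
      | cons a l ih => simp [ih]; ring
    have : r ≤ ∑ i, (walkCost c (sol.walk i) - walkCost cBk (sol.walk i)) := by
      rw [← hkey sol]
      refine Finset.sum_le_sum fun i _ => ?_
      rw [← hsplit i]
      exact hper i
    simp only [solCost]
    rw [Finset.sum_sub_distrib] at this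
    linarith
  -- upper bound construction
  have hconstr : ∀ sol : CARPSol V v0 d W, ∃ sol' : CARPSol V v0 d W,
      solCost c sol' = solCost cBk sol + r := by
    intro sol
    refine ⟨⟨sol.n, fun i => convertWalk sp (sol.walk i) (sol.serve i), sol.serve,
      fun i => convertWalk_edges sp (sol.walk i) (sol.serve i) (sol.serve_subset i),
      sol.serve_pos, sol.serve_cap, sol.serve_unique⟩, ?_⟩
    simp only [solCost]
    have hcost : ∀ i : Fin sol.n,
        walkCost c (convertWalk sp (sol.walk i) (sol.serve i))
          = walkCost cBk (sol.walk i) + ∑ e ∈ sol.serve i, (c e - cBk e) := by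
      intro i
      exact convertWalk_cost c cBk sp hsp' (sol.walk i) (sol.serve i) (sol.serve_subset i)
    rw [Finset.sum_congr rfl fun i _ => hcost i, Finset.sum_add_distrib]
    congr 1
    rw [← hkey sol]
    refine Finset.sum_congr rfl fun i _ => ?_
    refine (Finset.sum_subset Finset.inter_subset_left ?_).symm
    intro e he hne
    refine hF0 e (sol.serve_pos i e he) fun heR => hne (Finset.mem_inter.mpr ⟨he, heR⟩)
  -- assemble
  set A := {x : ℝ | ∃ sol : CARPSol V v0 d W, solCost c sol = x} with hA
  set B := {x : ℝ | ∃ sol : CARPSol V v0 d W, solCost cBk sol = x} with hB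
  obtain ⟨sol0⟩ := hfeas
  have hAne : A.Nonempty := ⟨_, sol0, rfl⟩
  have hBne : B.Nonempty := ⟨_, sol0, rfl⟩
  have hAbdd : BddBelow A := by
    refine ⟨0, ?_⟩
    rintro x ⟨sol, rfl⟩
    exact Finset.sum_nonneg fun i _ => walkCost_nonneg hc _
  have hBbdd : BddBelow B := by
    refine ⟨0, ?_⟩
    rintro x ⟨sol, rfl⟩
    exact Finset.sum_nonneg fun i _ => walkCost_nonneg hBk0 _
  refine le_antisymm ?_ ?_
  · have : ∀ b ∈ B, sInf A - r ≤ b := by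
      rintro b ⟨sol, rfl⟩
      obtain ⟨sol', hsol'⟩ := hconstr sol
      have : sInf A ≤ solCost cBk sol + r := hsol' ▸ csInf_le hAbdd ⟨sol', rfl⟩
      linarith
    have := le_csInf hBne this
    linarith
  · refine le_csInf hAne ?_
    rintro a ⟨sol, rfl⟩
    have h1 : sInf B ≤ solCost cBk sol := csInf_le hBbdd ⟨sol, rfl⟩
    have h2 := hgeq sol
    linarith
end

section
/- For every real α ≥ 1 there exists ℓ ≥ 1 such that, for the TSP instance on K4 with edge costs c({1,4}) = c({3,4}) = c({2,3}) = 1 and c({1,2}) = c({1,3}) = c({2,4}) = ℓ and the CARP instance obtained from it by the split-vertex construction (each vertex i replaced by two vertices i, i' joined by an edge of cost 0 and demand 1; every TSP edge {i,j} replaced by cost-c({i,j}), demand-0 edges between all copies of i and all copies of j; depot 1; capacity W = 4), the optimal CARP cost is strictly smaller than (1/α) times the minimum Hamiltonian cycle cost of the TSP instance. Consequently, an optimal or approximate solution of the constructed CARP instance does not yield an α-approximate Hamiltonian cycle, i.e., the split-vertex reduction from TSP to CARP is not approximation-preserving. -/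
noncomputable section

/-- TSP edge costs on `K4` (vertices `1,2,3,4` represented by
`0,1,2,3 : Fin 4`): `c({1,4}) = c({3,4}) = c({2,3}) = 1` and
`c({1,2}) = c({1,3}) = c({2,4}) = ℓ`. -/
def cTSP (ℓ : ℝ) : Sym2 (Fin 4) → ℝ :=
  fun e =>
    if e = s((0 : Fin 4), (3 : Fin 4)) ∨ e = s((2 : Fin 4), (3 : Fin 4)) ∨
        e = s((1 : Fin 4), (2 : Fin 4)) then 1
    else if e = s((0 : Fin 4), (1 : Fin 4)) ∨ e = s((0 : Fin 4), (2 : Fin 4)) ∨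
        e = s((1 : Fin 4), (3 : Fin 4)) then ℓ
    else 0

/-- Vertex set of the split-vertex instance: two copies `(i,0)` and `(i,1)`
of each TSP vertex `i`. -/
abbrev SplitV : Type := Fin 4 × Fin 2

/-- Demands of the split-vertex instance: split edges `{(i,0),(i,1)}` have
demand `1`, all other edges demand `0`. -/
def dSplit : Sym2 SplitV → ℝ :=
  fun e => if ∃ i : Fin 4, e = s((i, 0), (i, 1)) then 1 else 0

/-- Costs of the split-vertex instance obtained from the TSP costs `cTSP ℓ`:
split edges cost `0`, and every edge between a copy of `i` and a copy of `j`
(`i ≠ j`) inherits the TSP cost of `{i,j}`. -/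
def cSplit (ℓ : ℝ) : Sym2 SplitV → ℝ :=
  fun e =>
    if ∃ (i : Fin 4) (a b : Fin 2), e = s((i, a), (i, b)) then 0
    else if ∃ a b : Fin 2,
        e = s(((0 : Fin 4), a), ((3 : Fin 4), b)) ∨
        e = s(((2 : Fin 4), a), ((3 : Fin 4), b)) ∨
        e = s(((1 : Fin 4), a), ((2 : Fin 4), b)) then 1
    else ℓ

end

section Aux

open SimpleGraph

/-- The Hamiltonian cycle `0-1-2-3-0` in `K4`. -/
def hamWalk : (⊤ : SimpleGraph (Fin 4)).Walk 0 0 :=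
  .cons (u := 0) (v := 1) (by decide)
  (.cons (v := 2) (by decide)
  (.cons (v := 3) (by decide)
  (.cons (v := 0) (by decide) .nil)))

lemma hamWalk_isHamiltonianCycle : hamWalk.IsHamiltonianCycle := by
  rw [SimpleGraph.Walk.isHamiltonianCycle_iff_isCycle_and_support_count_tail_eq_one]
  refine ⟨⟨⟨⟨by decide⟩, by simp [hamWalk]⟩, by decide⟩, by decide⟩

/-- A cheap closed walk serving all four split edges. -/
def myWalk : (⊤ : SimpleGraph SplitV).Walk ((0 : Fin 4), (0 : Fin 2)) ((0 : Fin 4), (0 : Fin 2)) :=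
  .cons (v := ((0 : Fin 4), (1 : Fin 2))) (by decide)
  (.cons (v := ((3 : Fin 4), (0 : Fin 2))) (by decide)
  (.cons (v := ((3 : Fin 4), (1 : Fin 2))) (by decide)
  (.cons (v := ((2 : Fin 4), (0 : Fin 2))) (by decide)
  (.cons (v := ((2 : Fin 4), (1 : Fin 2))) (by decide)
  (.cons (v := ((1 : Fin 4), (0 : Fin 2))) (by decide)
  (.cons (v := ((1 : Fin 4), (1 : Fin 2))) (by decide)
  (.cons (v := ((2 : Fin 4), (1 : Fin 2))) (by decide)
  (.cons (v := ((3 : Fin 4), (1 : Fin 2))) (by decide)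
  (.cons (v := ((0 : Fin 4), (0 : Fin 2))) (by decide) .nil)))))))))

lemma cSplit_split (ℓ : ℝ) (i : Fin 4) (a b : Fin 2) : cSplit ℓ s((i, a), (i, b)) = 0 :=
  if_pos ⟨i, a, b, rfl⟩

lemma cSplit_cheap (ℓ : ℝ) (x y : SplitV)
    (h1 : ¬∃ (i : Fin 4) (a b : Fin 2), (s(x, y) : Sym2 SplitV) = s((i, a), (i, b)))
    (h2 : ∃ a b : Fin 2,
        (s(x, y) : Sym2 SplitV) = s(((0 : Fin 4), a), ((3 : Fin 4), b)) ∨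
        s(x, y) = s(((2 : Fin 4), a), ((3 : Fin 4), b)) ∨
        s(x, y) = s(((1 : Fin 4), a), ((2 : Fin 4), b))) :
    cSplit ℓ s(x, y) = 1 := by
  unfold cSplit; rw [if_neg h1, if_pos h2]

lemma cSplit_nonneg {ℓ : ℝ} (hℓ : 0 ≤ ℓ) (e : Sym2 SplitV) : 0 ≤ cSplit ℓ e := by
  unfold cSplit; split_ifs <;> norm_num
  exact hℓ

lemma dSplit_eq_one (i : Fin 4) : dSplit s((i, 0), (i, 1)) = 1 :=
  if_pos ⟨i, rfl⟩

/-- The explicit CARP solution: one walk serving all four split edges. -/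
def mySol : CARPSol SplitV ((0 : Fin 4), (0 : Fin 2)) dSplit 4 where
  n := 1
  walk := fun _ => myWalk
  serve := fun _ =>
    { s((((0 : Fin 4)), (0 : Fin 2)), (((0 : Fin 4)), (1 : Fin 2))),
      s((((1 : Fin 4)), (0 : Fin 2)), (((1 : Fin 4)), (1 : Fin 2))),
      s((((2 : Fin 4)), (0 : Fin 2)), (((2 : Fin 4)), (1 : Fin 2))),
      s((((3 : Fin 4)), (0 : Fin 2)), (((3 : Fin 4)), (1 : Fin 2))) }
  serve_subset := by decide
  serve_pos := by
    intro i e he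
    simp only [Finset.mem_insert, Finset.mem_singleton] at he
    rcases he with rfl | rfl | rfl | rfl <;> rw [dSplit_eq_one] <;> norm_num
  serve_cap := by
    intro i
    rw [Finset.sum_insert (by decide), Finset.sum_insert (by decide),
      Finset.sum_insert (by decide), Finset.sum_singleton,
      dSplit_eq_one, dSplit_eq_one, dSplit_eq_one, dSplit_eq_one]
    norm_num
  serve_unique := by
    intro e he
    have h : ∃ i : Fin 4, e = s((i, 0), (i, 1)) := by
      by_contra h
      rw [dSplit, if_neg h] at he
      exact lt_irrefl 0 he
    obtain ⟨i, rfl⟩ := h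
    refine ⟨0, ?_, fun j _ => Subsingleton.elim j 0⟩
    fin_cases i <;> decide

lemma solCost_mySol (ℓ : ℝ) : solCost (cSplit ℓ) mySol = 6 := by
  have : solCost (cSplit ℓ) mySol = walkCost (cSplit ℓ) myWalk := by
    exact Fin.sum_univ_one (fun _ => walkCost (cSplit ℓ) myWalk)
  rw [this, walkCost]
  simp only [myWalk, Walk.edges_cons, Walk.edges_nil, List.map_cons, List.map_nil,
    List.sum_cons, List.sum_nil]
  rw [cSplit_split, cSplit_split, cSplit_split, cSplit_split,
    cSplit_cheap ℓ ((0 : Fin 4), (1 : Fin 2)) ((3 : Fin 4), (0 : Fin 2)) (by decide) (by decide),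
    cSplit_cheap ℓ ((3 : Fin 4), (1 : Fin 2)) ((2 : Fin 4), (0 : Fin 2)) (by decide) (by decide),
    cSplit_cheap ℓ ((2 : Fin 4), (1 : Fin 2)) ((1 : Fin 4), (0 : Fin 2)) (by decide) (by decide),
    cSplit_cheap ℓ ((1 : Fin 4), (1 : Fin 2)) ((2 : Fin 4), (1 : Fin 2)) (by decide) (by decide),
    cSplit_cheap ℓ ((2 : Fin 4), (1 : Fin 2)) ((3 : Fin 4), (1 : Fin 2)) (by decide) (by decide),
    cSplit_cheap ℓ ((3 : Fin 4), (1 : Fin 2)) ((0 : Fin 4), (0 : Fin 2)) (by decide) (by decide)]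
  norm_num

lemma cTSP_nonneg {ℓ : ℝ} (hℓ : 0 ≤ ℓ) (e : Sym2 (Fin 4)) : 0 ≤ cTSP ℓ e := by
  unfold cTSP; split_ifs <;> norm_num
  exact hℓ

/-- Pigeonhole fact: any nondiagonal edge outside the three cheap edges
satisfies the "expensive" disjunction and not the "cheap" one. -/
lemma expensive_of_not_cheap (e : Sym2 (Fin 4)) (hd : ¬ e.IsDiag)
    (hC : e ∉ ({s((0 : Fin 4), (3 : Fin 4)), s((2 : Fin 4), (3 : Fin 4)),
        s((1 : Fin 4), (2 : Fin 4))} : Finset (Sym2 (Fin 4)))) :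
    ¬(e = s((0 : Fin 4), (3 : Fin 4)) ∨ e = s((2 : Fin 4), (3 : Fin 4)) ∨
        e = s((1 : Fin 4), (2 : Fin 4))) ∧
    (e = s((0 : Fin 4), (1 : Fin 4)) ∨ e = s((0 : Fin 4), (2 : Fin 4)) ∨
        e = s((1 : Fin 4), (3 : Fin 4))) := by
  revert hd hC; revert e; decide

lemma ham_cost_lb {ℓ : ℝ} (hℓ : 0 ≤ ℓ) {a : Fin 4}
    (p : (⊤ : SimpleGraph (Fin 4)).Walk a a) (hp : p.IsHamiltonianCycle) :
    ℓ ≤ walkCost (cTSP ℓ) p := by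
  classical
  set C : Finset (Sym2 (Fin 4)) :=
    {s((0 : Fin 4), (3 : Fin 4)), s((2 : Fin 4), (3 : Fin 4)), s((1 : Fin 4), (2 : Fin 4))}
  have hnodup : p.edges.Nodup := hp.isCycle.edges_nodup
  have hlen : p.edges.length = 4 := by
    rw [SimpleGraph.Walk.length_edges, hp.length_eq]; rfl
  have hcard : p.edges.toFinset.card = 4 := by
    rw [List.toFinset_card_of_nodup hnodup, hlen]
  have hnsub : ¬ p.edges.toFinset ⊆ C := by
    intro h
    have := Finset.card_le_card h
    rw [hcard] at this
    have hC : C.card ≤ 3 := by decide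
    omega
  obtain ⟨e, he, heC⟩ := Finset.not_subset.mp hnsub
  have he' : e ∈ p.edges := List.mem_toFinset.mp he
  have hd : ¬ e.IsDiag :=
    SimpleGraph.not_isDiag_of_mem_edgeSet _ (p.edges_subset_edgeSet he')
  obtain ⟨h1, h2⟩ := expensive_of_not_cheap e hd heC
  have hcost : cTSP ℓ e = ℓ := by
    unfold cTSP; rw [if_neg h1, if_pos h2]
  have hmem : cTSP ℓ e ∈ p.edges.map (cTSP ℓ) := List.mem_map_of_mem he'
  have := List.single_le_sum (l := p.edges.map (cTSP ℓ))
    (fun x hx => by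
      obtain ⟨f, _, rfl⟩ := List.mem_map.mp hx
      exact cTSP_nonneg hℓ f) _ hmem
  rw [hcost] at this
  exact this

end Aux

/-- for every `α ≥ 1` there is `ℓ ≥ 1` such that the optimal
cost of the split-vertex CARP instance (depot the first copy of vertex `1`,
capacity `W = 4`) is strictly smaller than `1/α` times the minimum
Hamiltonian-cycle cost of the underlying `K4` TSP instance; hence the
split-vertex reduction from TSP to CARP is not approximation-preserving. -/
theorem split_reduction_not_approx_preserving :
    ∀ α : ℝ, 1 ≤ α → ∃ ℓ : ℝ, 1 ≤ ℓ ∧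
      sInf {x : ℝ | ∃ sol : CARPSol SplitV ((0 : Fin 4), (0 : Fin 2)) dSplit 4,
          solCost (cSplit ℓ) sol = x} <
        (1 / α) *
          sInf {x : ℝ | ∃ (a : Fin 4)
            (p : (⊤ : SimpleGraph (Fin 4)).Walk a a),
            p.IsHamiltonianCycle ∧ walkCost (cTSP ℓ) p = x} := by
  intro α hα
  have hα0 : 0 < α := lt_of_lt_of_le one_pos hα
  refine ⟨6 * α + 1, by linarith, ?_⟩
  set ℓ : ℝ := 6 * α + 1 with hℓdef
  have hℓ0 : 0 ≤ ℓ := by positivity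
  set SC := {x : ℝ | ∃ sol : CARPSol SplitV ((0 : Fin 4), (0 : Fin 2)) dSplit 4,
      solCost (cSplit ℓ) sol = x}
  set SH := {x : ℝ | ∃ (a : Fin 4) (p : (⊤ : SimpleGraph (Fin 4)).Walk a a),
      p.IsHamiltonianCycle ∧ walkCost (cTSP ℓ) p = x}
  have hbdd : BddBelow SC := by
    refine ⟨0, fun x hx => ?_⟩
    obtain ⟨sol, rfl⟩ := hx
    refine Finset.sum_nonneg fun i _ => List.sum_nonneg fun y hy => ?_
    obtain ⟨f, _, rfl⟩ := List.mem_map.mp hy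
    exact cSplit_nonneg hℓ0 f
  have h1 : sInf SC ≤ 6 := csInf_le hbdd ⟨mySol, solCost_mySol ℓ⟩
  have h2 : ℓ ≤ sInf SH := by
    refine le_csInf ⟨walkCost (cTSP ℓ) hamWalk, 0, hamWalk, hamWalk_isHamiltonianCycle, rfl⟩ ?_
    rintro x ⟨a, p, hp, rfl⟩
    exact ham_cost_lb hℓ0 p hp
  have hstep : (1 / α) * ℓ ≤ (1 / α) * sInf SH :=
    mul_le_mul_of_nonneg_left h2 (by positivity)
  have hval : (1 / α) * ℓ = 6 + 1 / α := by
    rw [hℓdef]; field_simp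
  have : (6 : ℝ) < (1 / α) * ℓ := by
    rw [hval]
    have : 0 < 1 / α := by positivity
    linarith
  linarith
end
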